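/- Let X be a topological space with its Borel σ-algebra, H a complex Hilbert space, and M a measurement on X, i.e. a map M from the Borel sets of X to B(H) such that (i) for every countable family (Δₙ)ₙ of pairwise disjoint Borel sets and all x, y ∈ H, ∑ₙ ⟨M(Δₙ)x, M(Δₙ)y⟩ = ⟨M(⋃ₙ Δₙ)x, M(⋃ₙ Δₙ)y⟩, and (ii) M(X)† ∘ M(X) = 1. Then the map E defined by E(Δ) := M(Δ)† ∘ M(Δ) is a POVM on X: for every Borel set Δ, E(Δ) is an effect, i.e. 0 ≤ E(Δ) ≤ 1 in the ordering of self-adjoint operators; E is countably additive in the weak operator topology; and E(X) = 1. -/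

import Mathlib

/-- A *measurement* on a topological space `X` (with its Borel σ-algebra):
(i) σ-additivity of `Δ ↦ M(Δ)†M(Δ)` in the weak operator topology, and
(ii) `M(X)† ∘ M(X) = 1`. -/
def IsMeasurement {X H : Type*} [TopologicalSpace X] [MeasurableSpace X] [BorelSpace X]
    [NormedAddCommGroup H] [InnerProductSpace ℂ H] [CompleteSpace H]
    (M : Set X → (H →L[ℂ] H)) : Prop :=
  (∀ Δ : ℕ → Set X, (∀ n, MeasurableSet (Δ n)) → Pairwise (Function.onFun Disjoint Δ) →
      ∀ x y : H,
        HasSum (fun n => (inner ℂ (M (Δ n) x) (M (Δ n) y) : ℂ))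
          (inner ℂ (M (⋃ n, Δ n) x) (M (⋃ n, Δ n) y))) ∧
    ContinuousLinearMap.adjoint (M Set.univ) ∘L M Set.univ = 1

/-- A *POVM* on a topological space `X` (with its Borel σ-algebra): every
`E(Δ)` is an effect (`0 ≤ E(Δ) ≤ 1` in the Loewner order), `E` is countably
additive in the weak operator topology, and `E(X) = 1`. -/
def IsPOVM {X H : Type*} [TopologicalSpace X] [MeasurableSpace X] [BorelSpace X]
    [NormedAddCommGroup H] [InnerProductSpace ℂ H] [CompleteSpace H]
    (E : Set X → (H →L[ℂ] H)) : Prop :=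
  (∀ Δ : Set X, MeasurableSet Δ → 0 ≤ E Δ ∧ E Δ ≤ 1) ∧
    (∀ Δ : ℕ → Set X, (∀ n, MeasurableSet (Δ n)) → Pairwise (Function.onFun Disjoint Δ) →
      ∀ x y : H,
        HasSum (fun n => (inner ℂ x (E (Δ n) y) : ℂ)) (inner ℂ x (E (⋃ n, Δ n) y))) ∧
    E Set.univ = 1

/-- If `M` is a measurement, then
`E(Δ) := M(Δ)† ∘ M(Δ)` is a POVM. -/
theorem measurement_induces_povm
    {X H : Type*} [TopologicalSpace X] [MeasurableSpace X] [BorelSpace X]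
    [NormedAddCommGroup H] [InnerProductSpace ℂ H] [CompleteSpace H]
    (M : Set X → (H →L[ℂ] H)) (hM : IsMeasurement M) :
    IsPOVM (fun Δ => ContinuousLinearMap.adjoint (M Δ) ∘L M Δ) := by
  obtain ⟨hadd, hone⟩ := hM
  have hpos : ∀ Δ : Set X, (ContinuousLinearMap.adjoint (M Δ) ∘L M Δ).IsPositive := by
    intro Δ
    have := ContinuousLinearMap.isPositive_one.adjoint_conj (M Δ)
    simpa [show (1 : H →L[ℂ] H) ∘L M Δ = M Δ from ContinuousLinearMap.id_comp _] using this
  refine ⟨?_, ?_, hone⟩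
  · intro Δ hΔ
    constructor
    · exact (ContinuousLinearMap.nonneg_iff_isPositive _).mpr (hpos Δ)
    · rw [ContinuousLinearMap.le_def]
      refine ⟨ContinuousLinearMap.isSelfAdjoint_iff_isSymmetric.mp ((IsSelfAdjoint.one _).sub (hpos Δ).isSelfAdjoint), fun x => ?_⟩
      rw [ContinuousLinearMap.reApplyInnerSelf]
      -- key: use σ-additivity on Δ, Δᶜ, ∅, ∅, ...
      let S : ℕ → Set X := fun n => if n = 0 then Δ else if n = 1 then Δᶜ else ∅
      have hS0 : S 0 = Δ := rfl
      have hS1 : S 1 = Δᶜ := rfl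
      have hS2 : ∀ n, S (n + 2) = (∅ : Set X) := fun n => rfl
      have hmeas : ∀ n, MeasurableSet (S n) := by
        intro n
        rcases n with _ | _ | n
        · rw [hS0]; exact hΔ
        · rw [hS1]; exact hΔ.compl
        · rw [hS2]; exact MeasurableSet.empty
      have hdisj : Pairwise (Function.onFun Disjoint S) := by
        intro m n hmn
        unfold Function.onFun
        rcases m with _ | _ | m <;> rcases n with _ | _ | n <;>
          simp only [hS0, hS1, hS2] at *
        · exact absurd rfl hmn
        · exact disjoint_compl_right
        · exact Set.disjoint_empty _
        · exact disjoint_compl_left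
        · exact absurd rfl hmn
        · exact Set.disjoint_empty _
        · exact Set.empty_disjoint _
        · exact Set.empty_disjoint _
        · exact Set.empty_disjoint _
      have hunion : (⋃ n, S n) = Set.univ := by
        apply Set.eq_univ_of_forall
        intro a
        by_cases ha : a ∈ Δ
        · exact Set.mem_iUnion.2 ⟨0, by rw [hS0]; exact ha⟩
        · exact Set.mem_iUnion.2 ⟨1, by rw [hS1]; exact ha⟩
      have hsum := hadd S hmeas hdisj x x
      rw [hunion] at hsum
      have htot : (inner ℂ (M Set.univ x) (M Set.univ x) : ℂ) = inner ℂ x x := by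
        rw [← ContinuousLinearMap.adjoint_inner_right, ← ContinuousLinearMap.comp_apply, hone,
          ContinuousLinearMap.one_apply]
      rw [htot] at hsum
      have hre : HasSum (fun n => (inner ℂ (M (S n) x) (M (S n) x) : ℂ).re)
          ((inner ℂ x x : ℂ)).re := hsum.mapL Complex.reCLM
      have h0 : (inner ℂ (M (S 0) x) (M (S 0) x) : ℂ).re ≤ ((inner ℂ x x : ℂ)).re :=
        le_hasSum hre 0 (fun n _ => by
          simpa using inner_self_nonneg (𝕜 := ℂ) (x := M (S n) x))
      rw [hS0] at h0
      have hEx : (inner ℂ ((ContinuousLinearMap.adjoint (M Δ) ∘L M Δ) x) x : ℂ)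
          = inner ℂ (M Δ x) (M Δ x) := by
        rw [ContinuousLinearMap.comp_apply, ContinuousLinearMap.adjoint_inner_left]
      rw [ContinuousLinearMap.sub_apply, inner_sub_left, map_sub,
        ContinuousLinearMap.one_apply, hEx]
      simp only [RCLike.re_to_complex]
      linarith
  · intro Δ hmeas hdisj x y
    have key : ∀ Δ' : Set X, (inner ℂ x ((ContinuousLinearMap.adjoint (M Δ') ∘L M Δ') y) : ℂ)
        = inner ℂ (M Δ' x) (M Δ' y) := by
      intro Δ'
      rw [ContinuousLinearMap.comp_apply, ContinuousLinearMap.adjoint_inner_right]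
    simp only [key]
    exact hadd Δ hmeas hdisj x y
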